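/- Let (Y_i)_{i ∈ I} be a family of Esakia root systems and let ∏Y_i be their product Priestley space with projections π_i. Then ⊗Y_i = {C ∈ CC(∏Y_i) | π_i[C] is an upset of Y_i for every i ∈ I} is a closed subset of CC(∏Y_i) and a ⊴-upset of CC(∏Y_i) (if C₁ ∈ ⊗Y_i and C₁ ⊴ C₂ then C₂ ∈ ⊗Y_i); consequently, with the induced topology and order, ⊗Y_i is an Esakia root system. -/

import Mathlib

open Set TopologicalSpace

/-- The set of nonempty closed chains of a Priestley space `X`. -/
def CC (X : Type*) [TopologicalSpace X] [Preorder X] : Set (Set X) :=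
  {C | C.Nonempty ∧ IsClosed C ∧ IsChain (· ≤ ·) C}

variable {X : Type*} [TopologicalSpace X] [Preorder X]

/-- `□A = {C ∈ CC(X) | C ⊆ A}`. -/
def ccBox (A : Set X) : Set ↥(CC X) := {C | (C : Set X) ⊆ A}

/-- `◇A = {C ∈ CC(X) | C ∩ A ≠ ∅}`. -/
def ccDia (A : Set X) : Set ↥(CC X) := {C | ((C : Set X) ∩ A).Nonempty}

/-- The Vietoris topology on `CC X`, generated by the subbasis `{□V, ◇V | V clopen}`. -/
instance ccTop : TopologicalSpace ↥(CC X) :=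
  generateFrom {S | ∃ V : Set X, IsClopen V ∧ (S = ccBox V ∨ S = ccDia V)}

/-- The order `⊴` on closed chains: `C₁ ⊴ C₂` iff `C₂ ⊆ C₁` and `C₂` is an upset in `C₁`. -/
def lec (C₁ C₂ : Set X) : Prop :=
  C₂ ⊆ C₁ ∧ ∀ x ∈ C₂, ∀ y ∈ C₁, x ≤ y → y ∈ C₂

/-- The tensor product of a family of Esakia root systems: the nonempty closed chains of
the product whose projections are all upsets. -/
def tensor {I : Type*} (Y : I → Type*) [∀ i, TopologicalSpace (Y i)] [∀ i, Preorder (Y i)] :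
    Set ↥(CC (∀ i, Y i)) :=
  {C | ∀ i, IsUpperSet ((fun f => f i) '' (C : Set (∀ i, Y i)))}

/-! ### Auxiliary: generic ambient space -/

/-- The downset of a set. -/
def dnn {Z : Type*} [Preorder Z] (A : Set Z) : Set Z := {x | ∃ y ∈ A, x ≤ y}

lemma dnn_mono {Z : Type*} [Preorder Z] {A B : Set Z} (h : A ⊆ B) : dnn A ⊆ dnn B :=
  fun _ ⟨y, hy, hle⟩ => ⟨y, h hy, hle⟩

section Generic

variable {Z : Type*} [TopologicalSpace Z] [Preorder Z]

lemma memCC (C : ↥(CC Z)) : (C : Set Z).Nonempty ∧ IsClosed (C : Set Z) ∧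
    IsChain (· ≤ ·) (C : Set Z) := C.2

lemma isOpen_subbasic {s : Set ↥(CC Z)}
    (h : ∃ V : Set Z, IsClopen V ∧ (s = ccBox V ∨ s = ccDia V)) : IsOpen s :=
  isOpen_generateFrom_of_mem h

lemma compl_ccBox (V : Set Z) : (ccBox V)ᶜ = ccDia Vᶜ := by
  ext C
  simp only [ccBox, ccDia, mem_compl_iff, mem_setOf_eq, Set.not_subset]
  constructor
  · rintro ⟨a, ha, hav⟩; exact ⟨a, ha, hav⟩
  · rintro ⟨a, ha, hav⟩; exact ⟨a, ha, hav⟩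

lemma compl_ccDia (V : Set Z) : (ccDia V)ᶜ = ccBox Vᶜ := by
  have := compl_ccBox (Z := Z) Vᶜ
  rw [compl_compl] at this
  rw [← this, compl_compl]

lemma isClopen_ccBox {V : Set Z} (hV : IsClopen V) : IsClopen (ccBox V) := by
  constructor
  · rw [← isOpen_compl_iff, compl_ccBox]
    exact isOpen_subbasic ⟨Vᶜ, hV.compl, Or.inr rfl⟩
  · exact isOpen_subbasic ⟨V, hV, Or.inl rfl⟩

lemma isClopen_ccDia {V : Set Z} (hV : IsClopen V) : IsClopen (ccDia V) := by
  constructor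
  · rw [← isOpen_compl_iff, compl_ccDia]
    exact isOpen_subbasic ⟨Vᶜ, hV.compl, Or.inl rfl⟩
  · exact isOpen_subbasic ⟨V, hV, Or.inr rfl⟩

end Generic
set_option linter.unusedSectionVars false

section PriestleyAmbient

variable {Z : Type*} [TopologicalSpace Z] [PartialOrder Z] [CompactSpace Z] [PriestleySpace Z]

/-- In a compact Priestley space, a point outside a closed set can be separated by a clopen. -/
lemma exists_clopen_sep {F : Set Z} (hF : IsClosed F) {x : Z} (hx : x ∉ F) :
    ∃ V : Set Z, IsClopen V ∧ x ∈ V ∧ ∀ y ∈ F, y ∉ V := by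
  have key : ∀ y : F, ∃ W : Set Z, IsClopen W ∧ x ∈ W ∧ (y : Z) ∉ W := by
    rintro ⟨y, hy⟩
    have hne : x ≠ y := fun h => hx (h ▸ hy)
    obtain ⟨U, hU, _, hxU, hyU⟩ := exists_isClopen_upper_or_lower_of_ne hne
    exact ⟨U, hU, hxU, hyU⟩
  choose W hWcl hxW hyW using key
  obtain ⟨t, ht⟩ := (hF.isCompact).elim_finite_subcover (fun y : F => (W y)ᶜ)
    (fun y => (hWcl y).compl.isOpen) (fun y hy => mem_iUnion.2 ⟨⟨y, hy⟩, hyW _⟩)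
  refine ⟨⋂ y ∈ t, W y, isClopen_biInter_finset (fun y _ => hWcl y), ?_, ?_⟩
  · exact mem_biInter fun y _ => hxW y
  · intro y hy hmem
    obtain ⟨y', hy't, hy'⟩ := mem_iUnion₂.1 (ht hy)
    exact hy' (mem_iInter₂.1 hmem y' hy't)

lemma exists_clopen_of_mem_open {O : Set Z} (hO : IsOpen O) {x : Z} (hx : x ∈ O) :
    ∃ V : Set Z, IsClopen V ∧ x ∈ V ∧ V ⊆ O := by
  obtain ⟨V, hV, hxV, hdis⟩ := exists_clopen_sep hO.isClosed_compl (fun h => h hx)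
  exact ⟨V, hV, hxV, fun y hy => by_contra fun hyO => hdis y hyO hy⟩

lemma isClosed_Ici_pr (x : Z) : IsClosed (Ici x) := by
  rw [← isOpen_compl_iff, isOpen_iff_forall_mem_open]
  intro y hy
  obtain ⟨U, hU, hUup, hxU, hyU⟩ := exists_isClopen_upper_of_not_le (hy : ¬x ≤ y)
  exact ⟨Uᶜ, fun z hz hxz => hz (hUup hxz hxU), hU.compl.isOpen, hyU⟩

/-- The downset of a closed set in a compact Priestley space is closed. -/
lemma isClosed_dnn {F : Set Z} (hF : IsClosed F) : IsClosed (dnn F) := by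
  rw [← isOpen_compl_iff, isOpen_iff_forall_mem_open]
  intro f hf
  have key : ∀ g : F, ∃ U : Set Z, IsClopen U ∧ IsUpperSet U ∧ f ∈ U ∧ (g : Z) ∉ U := by
    rintro ⟨g, hg⟩
    exact exists_isClopen_upper_of_not_le (fun h => hf ⟨g, hg, h⟩)
  choose U hUcl hUup hfU hgU using key
  obtain ⟨t, ht⟩ := (hF.isCompact).elim_finite_subcover (fun g : F => (U g)ᶜ)
    (fun g => (hUcl g).compl.isOpen) (fun g hg => mem_iUnion.2 ⟨⟨g, hg⟩, hgU _⟩)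
  refine ⟨⋂ g ∈ t, U g, ?_, ?_, mem_biInter fun g _ => hfU g⟩
  · rintro h hh ⟨g, hgF, hle⟩
    obtain ⟨g', hg't, hg'⟩ := mem_iUnion₂.1 (ht hgF)
    exact hg' (hUup g' hle (mem_iInter₂.1 hh g' hg't))
  · exact (isClopen_biInter_finset (fun g _ => hUcl g)).isOpen

/-- A point outside the downset of a closed set is outside the downset of some clopen superset. -/
lemma exists_clopen_dn {K : Set Z} (hK : IsClosed K) {w : Z} (hw : w ∉ dnn K) :
    ∃ G : Set Z, IsClopen G ∧ K ⊆ G ∧ w ∉ dnn G := by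
  have key : ∀ k : K, ∃ U : Set Z, IsClopen U ∧ IsUpperSet U ∧ w ∈ U ∧ (k : Z) ∉ U := by
    rintro ⟨k, hk⟩
    exact exists_isClopen_upper_of_not_le (fun h => hw ⟨k, hk, h⟩)
  choose U hUcl hUup hwU hkU using key
  obtain ⟨t, ht⟩ := (hK.isCompact).elim_finite_subcover (fun k : K => (U k)ᶜ)
    (fun k => (hUcl k).compl.isOpen) (fun k hk => mem_iUnion.2 ⟨⟨k, hk⟩, hkU _⟩)
  refine ⟨⋃ k ∈ t, (U k)ᶜ, ?_, fun k hk => ht hk, ?_⟩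
  · exact isClopen_biUnion_finset (fun k _ => (hUcl k).compl)
  · rintro ⟨g, hg, hle⟩
    obtain ⟨k, hkt, hk⟩ := mem_iUnion₂.1 hg
    exact hk (hUup k hle (hwU k))

lemma exists_min_finite {s : Set Z} (hs : s.Finite) (hne : s.Nonempty)
    (hchain : IsChain (· ≤ ·) s) : ∃ m ∈ s, ∀ x ∈ s, m ≤ x := by
  obtain ⟨m, hm, hmin⟩ : ∃ m ∈ s, ∀ x ∈ s, x ≤ m → m = x := by
    obtain ⟨m, hm⟩ := hs.exists_minimal hne
    exact ⟨m, hm.1, fun x hx h => le_antisymm (hm.2 hx h) h⟩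
  refine ⟨m, hm, fun x hx => ?_⟩
  rcases eq_or_ne m x with rfl | hne'
  · exact le_refl _
  rcases hchain hm hx hne' with h | h
  · exact h
  · exact le_of_eq (hmin x hx h)

end PriestleyAmbient
/-! ### Compactness of `CC Z` -/

/-- The clopen subsets of a space. -/
abbrev KlZ (Z : Type*) [TopologicalSpace Z] := {V : Set Z // IsClopen V}

section Compactness

variable {Z : Type*} [TopologicalSpace Z] [Preorder Z]

open Classical in
/-- The "hit function" encoding of a closed chain. -/
noncomputable def phiCC (C : ↥(CC Z)) : KlZ Z → Bool :=
  fun V => decide ((C : Set Z) ∩ V.1).Nonempty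

lemma phiCC_eq_true {C : ↥(CC Z)} {V : KlZ Z} :
    phiCC C V = true ↔ ((C : Set Z) ∩ V.1).Nonempty := by simp [phiCC]

lemma phiCC_eq_false {C : ↥(CC Z)} {V : KlZ Z} :
    phiCC C V = false ↔ ¬ ((C : Set Z) ∩ V.1).Nonempty := by simp [phiCC]

/-- Conditions cutting out the image of `phiCC`. -/
def SCC (Z : Type*) [TopologicalSpace Z] [Preorder Z] : Set (KlZ Z → Bool) :=
  {g | g ⟨univ, isClopen_univ⟩ = true ∧ g ⟨∅, isClopen_empty⟩ = false ∧
    (∀ V W : KlZ Z, g ⟨V.1 ∪ W.1, V.2.union W.2⟩ = (g V || g W)) ∧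
    (∀ V W : KlZ Z, (∀ v ∈ V.1, ∀ w ∈ W.1, ¬v ≤ w ∧ ¬w ≤ v) →
      (g V = false ∨ g W = false))}

lemma sccMono {g : KlZ Z → Bool}
    (hunion : ∀ V W : KlZ Z, g ⟨V.1 ∪ W.1, V.2.union W.2⟩ = (g V || g W))
    {V W : KlZ Z} (hVW : V.1 ⊆ W.1) (hV : g V = true) : g W = true := by
  have h1 : (⟨V.1 ∪ W.1, V.2.union W.2⟩ : KlZ Z) = W :=
    Subtype.ext (union_eq_self_of_subset_left hVW)
  have h2 := hunion V W
  rw [h1, hV] at h2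
  rw [h2]; rfl

lemma sccUnionFalse {g : KlZ Z → Bool} (hempty : g ⟨∅, isClopen_empty⟩ = false)
    (hunion : ∀ V W : KlZ Z, g ⟨V.1 ∪ W.1, V.2.union W.2⟩ = (g V || g W)) :
    ∀ t : Finset (KlZ Z), (∀ v ∈ t, g v = false) →
      ∀ W : KlZ Z, W.1 = ⋃ v ∈ t, v.1 → g W = false := by
  classical
  intro t
  induction t using Finset.induction_on with
  | empty =>
    intro _ W hW
    have : W = ⟨∅, isClopen_empty⟩ := Subtype.ext (by simp [hW])
    rw [this]; exact hempty
  | @insert a t ha ih =>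
    intro hall W hW
    have hUt : IsClopen (⋃ v ∈ t, v.1) := isClopen_biUnion_finset (fun v _ => v.2)
    have hW' : W = ⟨a.1 ∪ ⋃ v ∈ t, v.1, a.2.union hUt⟩ := by
      apply Subtype.ext
      rw [hW]
      simp [Finset.set_biUnion_insert]
    rw [hW', hunion a ⟨_, hUt⟩, hall a (Finset.mem_insert_self a t),
      ih (fun v hv => hall v (Finset.mem_insert_of_mem hv)) ⟨_, hUt⟩ rfl]
    rfl

lemma phiCC_mem_SCC (C : ↥(CC Z)) : phiCC C ∈ SCC Z := by
  refine ⟨?_, ?_, ?_, ?_⟩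
  · rw [phiCC_eq_true]
    simpa using C.2.1
  · rw [phiCC_eq_false]
    simp
  · intro V W
    have hiff : (((C : Set Z) ∩ (V.1 ∪ W.1)).Nonempty) ↔
        ((C : Set Z) ∩ V.1).Nonempty ∨ ((C : Set Z) ∩ W.1).Nonempty := by
      rw [inter_union_distrib_left]; exact union_nonempty
    by_cases h1 : ((C : Set Z) ∩ V.1).Nonempty <;>
      by_cases h2 : ((C : Set Z) ∩ W.1).Nonempty <;>
        simp [phiCC, hiff, h1, h2]
  · intro V W hinc
    by_contra hcon
    push_neg at hcon
    obtain ⟨h1, h2⟩ := hcon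
    rw [Bool.ne_false_iff, phiCC_eq_true] at h1 h2
    obtain ⟨v, hvC, hvV⟩ := h1
    obtain ⟨w, hwC, hwW⟩ := h2
    rcases eq_or_ne v w with rfl | hne
    · exact (hinc v hvV v hwW).1 le_rfl
    rcases C.2.2.2 hvC hwC hne with h | h
    · exact (hinc v hvV w hwW).1 h
    · exact (hinc v hvV w hwW).2 h

lemma isClosed_SCC : IsClosed (SCC Z) := by
  have hcoord : ∀ (V : KlZ Z) (b : Bool), IsClosed {g : KlZ Z → Bool | g V = b} :=
    fun V b => isClosed_eq (continuous_apply V) continuous_const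
  have : SCC Z = {g : KlZ Z → Bool | g ⟨univ, isClopen_univ⟩ = true} ∩
      ({g | g ⟨∅, isClopen_empty⟩ = false} ∩
      ((⋂ V : KlZ Z, ⋂ W : KlZ Z,
        {g | g ⟨V.1 ∪ W.1, V.2.union W.2⟩ = (g V || g W)}) ∩
      (⋂ V : KlZ Z, ⋂ W : KlZ Z,
        ⋂ (_ : ∀ v ∈ V.1, ∀ w ∈ W.1, ¬v ≤ w ∧ ¬w ≤ v),
        ({g | g V = false} ∪ {g | g W = false})))) := by
    ext g
    simp only [SCC, mem_inter_iff, mem_setOf_eq, mem_iInter, mem_union]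
  rw [this]
  refine (hcoord _ _).inter ((hcoord _ _).inter (IsClosed.inter ?_ ?_))
  · refine isClosed_iInter fun V => isClosed_iInter fun W => ?_
    refine isClosed_eq (continuous_apply _) ?_
    have h1 : Continuous (fun g : KlZ Z → Bool => ((g V, g W) : Bool × Bool)) :=
      (continuous_apply V).prodMk (continuous_apply W)
    exact (continuous_of_discreteTopology (f := fun p : Bool × Bool => p.1 || p.2)).comp h1
  · refine isClosed_iInter fun V => isClosed_iInter fun W => isClosed_iInter fun _ => ?_
    exact (hcoord V false).union (hcoord W false)

end Compactness
section Compactness2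

variable {Z : Type*} [TopologicalSpace Z] [PartialOrder Z] [CompactSpace Z] [PriestleySpace Z]

lemma scc_subset_range {g : KlZ Z → Bool} (hg : g ∈ SCC Z) :
    ∃ C : ↥(CC Z), phiCC C = g := by
  classical
  obtain ⟨huniv, hempty, hunion, hchain⟩ := hg
  set Cg : Set Z := {x : Z | ∀ V : KlZ Z, x ∈ V.1 → g V = true} with hCg
  -- a useful covering device
  set cover : KlZ Z → Set Z := fun V => if g V = false then V.1 else ∅ with hcover
  have hco : ∀ V, IsOpen (cover V) := by
    intro V
    rw [hcover]
    dsimp only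
    split_ifs
    · exact V.2.isOpen
    · exact isOpen_empty
  have hcov : ∀ x ∉ Cg, x ∈ ⋃ V, cover V := by
    intro x hx
    rw [hCg, mem_setOf_eq] at hx
    push_neg at hx
    obtain ⟨V, hxV, hgV⟩ := hx
    rw [show (g V ≠ true) = (¬ g V = true) from rfl, Bool.not_eq_true] at hgV
    exact mem_iUnion.2 ⟨V, by rw [hcover]; simpa [hgV] using hxV⟩
  -- from a finite subcover to a contradiction with `g` being `true` somewhere
  have hkey : ∀ (t : Finset (KlZ Z)) (V : KlZ Z), g V = true →
      V.1 ⊆ ⋃ W ∈ t, cover W → False := by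
    intro t V hgV hsub
    set t' : Finset (KlZ Z) := t.filter (fun W => g W = false) with ht'
    have hsub' : V.1 ⊆ ⋃ W ∈ t', W.1 := by
      intro x hx
      obtain ⟨W, hWt, hxW⟩ := mem_iUnion₂.1 (hsub hx)
      rw [hcover] at hxW
      dsimp only at hxW
      by_cases hgW : g W = false
      · rw [if_pos hgW] at hxW
        exact mem_iUnion₂.2 ⟨W, Finset.mem_filter.2 ⟨hWt, hgW⟩, hxW⟩
      · rw [if_neg hgW] at hxW
        exact absurd hxW (notMem_empty x)
    have hUcl : IsClopen (⋃ W ∈ t', W.1) := isClopen_biUnion_finset (fun W _ => W.2)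
    have hfalse : g ⟨⋃ W ∈ t', W.1, hUcl⟩ = false :=
      sccUnionFalse hempty hunion t' (fun W hW => (Finset.mem_filter.1 hW).2) _ rfl
    have htrue : g ⟨⋃ W ∈ t', W.1, hUcl⟩ = true := sccMono hunion hsub' hgV
    rw [htrue] at hfalse
    simp at hfalse
  have hCgmem : Cg ∈ CC Z := by
    refine ⟨?_, ?_, ?_⟩
    · -- nonempty
      by_contra hne
      rw [Set.not_nonempty_iff_eq_empty] at hne
      obtain ⟨t, ht⟩ := isCompact_univ.elim_finite_subcover cover hco
        (fun x _ => hcov x (by rw [hne]; exact notMem_empty x))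
      exact hkey t ⟨univ, isClopen_univ⟩ huniv (fun x hx => ht (mem_univ x))
    · -- closed
      have : Cg = ⋂ (V : KlZ Z), ⋂ (_ : g V = false), (V.1)ᶜ := by
        ext x
        simp only [hCg, mem_setOf_eq, mem_iInter, mem_compl_iff]
        constructor
        · intro h V hgV hxV
          rw [h V hxV] at hgV
          simp at hgV
        · intro h V hxV
          cases hgV : g V with
          | false => exact absurd hxV (h V hgV)
          | true => rfl
      rw [this]
      exact isClosed_iInter fun V => isClosed_iInter fun _ => V.2.compl.isClosed
    · -- chain
      intro x hx y hy hne
      by_contra hcomp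
      push_neg at hcomp
      obtain ⟨hnxy, hnyx⟩ := hcomp
      obtain ⟨U₁, hU₁, hU₁up, hxU₁, hyU₁⟩ := exists_isClopen_upper_of_not_le hnxy
      obtain ⟨U₂, hU₂, hU₂up, hyU₂, hxU₂⟩ := exists_isClopen_upper_of_not_le hnyx
      have hinc : ∀ v ∈ U₁ ∩ U₂ᶜ, ∀ w ∈ U₂ ∩ U₁ᶜ, ¬v ≤ w ∧ ¬w ≤ v := by
        rintro v ⟨hv1, hv2⟩ w ⟨hw1, hw2⟩
        exact ⟨fun h => hw2 (hU₁up h hv1), fun h => hv2 (hU₂up h hw1)⟩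
      rcases hchain ⟨U₁ ∩ U₂ᶜ, hU₁.inter hU₂.compl⟩ ⟨U₂ ∩ U₁ᶜ, hU₂.inter hU₁.compl⟩ hinc with
        h | h
      · rw [hx ⟨U₁ ∩ U₂ᶜ, hU₁.inter hU₂.compl⟩ ⟨hxU₁, hxU₂⟩] at h
        simp at h
      · rw [hy ⟨U₂ ∩ U₁ᶜ, hU₂.inter hU₁.compl⟩ ⟨hyU₂, hyU₁⟩] at h
        simp at h
  refine ⟨⟨Cg, hCgmem⟩, ?_⟩
  funext V
  cases hgV : g V with
  | false =>
    rw [phiCC_eq_false]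
    rintro ⟨x, hxC, hxV⟩
    rw [hxC V hxV] at hgV
    simp at hgV
  | true =>
    rw [phiCC_eq_true]
    by_contra hemp
    rw [Set.not_nonempty_iff_eq_empty] at hemp
    have hVsub : V.1 ⊆ ⋃ W, cover W := by
      intro x hxV
      refine hcov x fun hxC => ?_
      have : x ∈ (Cg : Set Z) ∩ V.1 := ⟨hxC, hxV⟩
      rw [show (Cg : Set Z) ∩ V.1 = ((⟨Cg, hCgmem⟩ : ↥(CC Z)) : Set Z) ∩ V.1 from rfl,
        hemp] at this
      exact this
    obtain ⟨t, ht⟩ := (V.2.isClosed.isCompact).elim_finite_subcover cover hco hVsub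
    exact hkey t V hgV ht
  
lemma range_phiCC : Set.range (phiCC : ↥(CC Z) → KlZ Z → Bool) = SCC Z := by
  apply subset_antisymm
  · rintro g ⟨C, rfl⟩
    exact phiCC_mem_SCC C
  · intro g hg
    obtain ⟨C, hC⟩ := scc_subset_range hg
    exact ⟨C, hC⟩

end Compactness2
section Compactness3

variable {Z : Type*} [TopologicalSpace Z] [PartialOrder Z] [CompactSpace Z] [PriestleySpace Z]

lemma phiCC_preimage_false (V : KlZ Z) :
    (fun C : ↥(CC Z) => phiCC C V) ⁻¹' {false} = ccBox (V.1ᶜ) := by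
  ext C
  simp only [mem_preimage, mem_singleton_iff, ccBox, mem_setOf_eq]
  rw [phiCC_eq_false]
  constructor
  · intro h x hxC hxV
    exact h ⟨x, hxC, hxV⟩
  · rintro h ⟨x, hxC, hxV⟩
    exact h hxC hxV

lemma phiCC_preimage_true (V : KlZ Z) :
    (fun C : ↥(CC Z) => phiCC C V) ⁻¹' {true} = ccDia V.1 := by
  ext C
  simp only [mem_preimage, mem_singleton_iff, ccDia, mem_setOf_eq]
  exact phiCC_eq_true

lemma ccTop_eq_induced :
    (ccTop : TopologicalSpace ↥(CC Z)) =
      TopologicalSpace.induced phiCC Pi.topologicalSpace := by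
  apply le_antisymm
  · apply continuous_iff_le_induced.mp
    apply continuous_pi
    intro V
    rw [continuous_discrete_rng]
    intro b
    cases b
    · rw [phiCC_preimage_false]
      exact (isClopen_ccBox V.2.compl).isOpen
    · rw [phiCC_preimage_true]
      exact (isClopen_ccDia V.2).isOpen
  · show TopologicalSpace.induced phiCC Pi.topologicalSpace ≤
      generateFrom {S | ∃ V : Set Z, IsClopen V ∧ (S = ccBox V ∨ S = ccDia V)}
    apply le_generateFrom
    rintro s ⟨V, hV, rfl | rfl⟩
    · have : ccBox V = phiCC ⁻¹'
          ((fun g : KlZ Z → Bool => g ⟨Vᶜ, hV.compl⟩) ⁻¹' {false}) := by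
      
        rw [show phiCC ⁻¹' ((fun g : KlZ Z → Bool => g ⟨Vᶜ, hV.compl⟩) ⁻¹' {false}) =
          (fun C : ↥(CC Z) => phiCC C ⟨Vᶜ, hV.compl⟩) ⁻¹' {false} from rfl,
          phiCC_preimage_false, compl_compl]
      rw [this]
      exact isOpen_induced ((isOpen_discrete _).preimage (continuous_apply _))
    · have : ccDia V = phiCC ⁻¹'
          ((fun g : KlZ Z → Bool => g ⟨V, hV⟩) ⁻¹' {true}) := by
        rw [show phiCC ⁻¹' ((fun g : KlZ Z → Bool => g ⟨V, hV⟩) ⁻¹' {true}) =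
          (fun C : ↥(CC Z) => phiCC C ⟨V, hV⟩) ⁻¹' {true} from rfl,
          phiCC_preimage_true]
      rw [this]
      exact isOpen_induced ((isOpen_discrete _).preimage (continuous_apply _))

lemma ccCompactSpace : CompactSpace ↥(CC Z) := by
  have hind : Topology.IsInducing (phiCC : ↥(CC Z) → KlZ Z → Bool) := ⟨ccTop_eq_induced⟩
  have hcl : IsClosed (Set.range (phiCC : ↥(CC Z) → KlZ Z → Bool)) := by
    rw [range_phiCC]; exact isClosed_SCC
  have hcomp : IsCompact (Set.range (phiCC : ↥(CC Z) → KlZ Z → Bool)) := hcl.isCompact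
  have : IsCompact (univ : Set ↥(CC Z)) := by
    rw [hind.isCompact_iff, image_univ]
    exact hcomp
  exact ⟨this⟩

end Compactness3
section Separation

variable {Z : Type*} [TopologicalSpace Z] [PartialOrder Z] [CompactSpace Z] [PriestleySpace Z]

lemma ccBox_upset (V : Set Z) :
    ∀ D ∈ ccBox V, ∀ E : ↥(CC Z), lec (D : Set Z) (E : Set Z) → E ∈ ccBox V :=
  fun _ hD _ hle => hle.1.trans hD

lemma ccBoxDia_upset {U B : Set Z} (hU : IsUpperSet U) (hBU : B ⊆ U) :
    ∀ D ∈ ccBox U ∪ ccDia B, ∀ E : ↥(CC Z), lec (D : Set Z) (E : Set Z) →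
      E ∈ ccBox U ∪ ccDia B := by
  rintro D hD E hle
  rcases hD with hD | ⟨b, hbD, hbB⟩
  · exact Or.inl (hle.1.trans hD)
  by_cases hk : ∃ k ∈ (E : Set Z), k ≤ b
  · obtain ⟨k, hkE, hkb⟩ := hk
    exact Or.inr ⟨b, hle.2 k hkE b hbD hkb, hbB⟩
  · push_neg at hk
    refine Or.inl fun k hkE => ?_
    rcases eq_or_ne b k with rfl | hne
    · exact hBU hbB
    rcases D.2.2.2 hbD (hle.1 hkE) hne with h | h
    · exact hU h (hBU hbB)
    · exact absurd h (hk k hkE)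

/-- Priestley separation for `CC Z`. -/
lemma cc_sep (C K : ↥(CC Z)) (h : ¬ lec (C : Set Z) (K : Set Z)) :
    ∃ 𝒰 : Set ↥(CC Z), IsClopen 𝒰 ∧
      (∀ D ∈ 𝒰, ∀ E : ↥(CC Z), lec (D : Set Z) (E : Set Z) → E ∈ 𝒰) ∧
      C ∈ 𝒰 ∧ K ∉ 𝒰 := by
  by_cases hsub : (K : Set Z) ⊆ (C : Set Z)
  · -- the upset condition fails
    rw [lec, not_and] at h
    have h' := h hsub
    push_neg at h'
    obtain ⟨x, hxK, y, hyC, hxy, hyK⟩ := h'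
    have hnyx : ¬ y ≤ x := fun hyx => hyK (le_antisymm hyx hxy ▸ hxK)
    obtain ⟨U, hUcl, hUup, hyU, hxU⟩ := exists_isClopen_upper_of_not_le hnyx
    obtain ⟨W, hWcl, hyW, hWK⟩ := exists_clopen_sep K.2.2.1 hyK
    refine ⟨ccBox U ∪ ccDia (U ∩ W), (isClopen_ccBox hUcl).union
      (isClopen_ccDia (hUcl.inter hWcl)), ccBoxDia_upset hUup inter_subset_left, ?_, ?_⟩
    · exact Or.inr ⟨y, hyC, hyU, hyW⟩
    · rintro (hKU | ⟨w, hwK, _, hwW⟩)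
      · exact hxU (hKU hxK)
      · exact hWK w hwK hwW
  · obtain ⟨x, hxK, hxC⟩ := not_subset.1 hsub
    obtain ⟨V, hVcl, hxV, hVC⟩ := exists_clopen_sep C.2.2.1 hxC
    refine ⟨ccBox Vᶜ, isClopen_ccBox hVcl.compl, ccBox_upset _, ?_, ?_⟩
    · exact fun c hc => hVC c hc
    · exact fun hK => hK hxK hxV

lemma cc_t2 : T2Space ↥(CC Z) := by
  constructor
  intro C K hne
  have : ¬ lec (C : Set Z) (K : Set Z) ∨ ¬ lec (K : Set Z) (C : Set Z) := by
    by_contra hcon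
    push_neg at hcon
    exact hne (Subtype.ext (subset_antisymm hcon.2.1 hcon.1.1))
  rcases this with h | h
  · obtain ⟨𝒰, h𝒰, _, hC, hK⟩ := cc_sep C K h
    exact ⟨𝒰, 𝒰ᶜ, h𝒰.isOpen, h𝒰.compl.isOpen, hC, hK, disjoint_compl_right⟩
  · obtain ⟨𝒰, h𝒰, _, hK, hC⟩ := cc_sep K C h
    exact ⟨𝒰ᶜ, 𝒰, h𝒰.compl.isOpen, h𝒰.isOpen, hC, hK, disjoint_compl_left⟩

lemma lec_isClosed : IsClosed {p : ↥(CC Z) × ↥(CC Z) | lec (p.1 : Set Z) (p.2 : Set Z)} := by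
  rw [← isOpen_compl_iff, isOpen_iff_forall_mem_open]
  rintro ⟨C, K⟩ hp
  simp only [mem_compl_iff, mem_setOf_eq] at hp
  by_cases hsub : (K : Set Z) ⊆ (C : Set Z)
  · rw [lec, not_and] at hp
    have h' := hp hsub
    push_neg at h'
    obtain ⟨x, hxK, y, hyC, hxy, hyK⟩ := h'
    have hnyx : ¬ y ≤ x := fun hyx => hyK (le_antisymm hyx hxy ▸ hxK)
    obtain ⟨U, hUcl, hUup, hyU, hxU⟩ := exists_isClopen_upper_of_not_le hnyx
    obtain ⟨W, hWcl, hyW, hWK⟩ := exists_clopen_sep K.2.2.1 hyK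
    refine ⟨(ccDia (U ∩ W)) ×ˢ (ccDia Uᶜ ∩ ccBox Wᶜ), ?_, ?_, ?_⟩
    · rintro ⟨C', K'⟩ ⟨⟨y', hy'C, hy'U, hy'W⟩, ⟨x', hx'K, hx'U⟩, hK'W⟩
      simp only [mem_compl_iff, mem_setOf_eq]
      rintro ⟨hsub', hup'⟩
      have hx'C : x' ∈ (C' : Set Z) := hsub' hx'K
      have hx'y' : x' ≤ y' := by
        rcases eq_or_ne x' y' with rfl | hne
        · exact le_rfl
        rcases C'.2.2.2 hx'C hy'C hne with h | h
        · exact h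
        · exact absurd (hUup h hy'U) hx'U
      exact hK'W (hup' x' hx'K y' hy'C hx'y') hy'W
    · exact ((isClopen_ccDia (hUcl.inter hWcl)).isOpen).prod
        (((isClopen_ccDia hUcl.compl).inter (isClopen_ccBox hWcl.compl)).isOpen)
    · exact ⟨⟨y, hyC, hyU, hyW⟩, ⟨x, hxK, hxU⟩, fun k hk => hWK k hk⟩
  · obtain ⟨x, hxK, hxC⟩ := not_subset.1 hsub
    obtain ⟨V, hVcl, hxV, hVC⟩ := exists_clopen_sep C.2.2.1 hxC
    refine ⟨(ccBox Vᶜ) ×ˢ (ccDia V), ?_, ?_, ?_⟩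
    · rintro ⟨C', K'⟩ ⟨hC', x', hx'K, hx'V⟩
      simp only [mem_compl_iff, mem_setOf_eq]
      rintro ⟨hsub', _⟩
      exact hC' (hsub' hx'K) hx'V
    · exact ((isClopen_ccBox hVcl.compl).isOpen).prod ((isClopen_ccDia hVcl).isOpen)
    · exact ⟨fun c hc => hVC c hc, x, hxK, hxV⟩

end Separation
section Downset

variable {Z : Type*} [TopologicalSpace Z] [PartialOrder Z] [CompactSpace Z] [PriestleySpace Z]

lemma cc_basis : IsTopologicalBasis ((fun f => Set.sInter f) ''
    {f : Set (Set ↥(CC Z)) | f.Finite ∧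
      f ⊆ {S | ∃ V : Set Z, IsClopen V ∧ (S = ccBox V ∨ S = ccDia V)}}) :=
  isTopologicalBasis_of_subbasis rfl

lemma cc_basis_clopen {b : Set ↥(CC Z)}
    (hb : b ∈ (fun f => Set.sInter f) '' {f : Set (Set ↥(CC Z)) | f.Finite ∧
      f ⊆ {S | ∃ V : Set Z, IsClopen V ∧ (S = ccBox V ∨ S = ccDia V)}}) : IsClopen b := by
  obtain ⟨f, ⟨hffin, hfsub⟩, rfl⟩ := hb
  show IsClopen (Set.sInter f)
  rw [Set.sInter_eq_biInter]
  refine Set.Finite.isClopen_biInter hffin (fun s hs => ?_)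
  obtain ⟨V, hV, rfl | rfl⟩ := hfsub hs
  · exact isClopen_ccBox hV
  · exact isClopen_ccDia hV

lemma cc_clopen_nbhd {O : Set ↥(CC Z)} (hO : IsOpen O) {C : ↥(CC Z)} (hC : C ∈ O) :
    ∃ N : Set ↥(CC Z), IsClopen N ∧ C ∈ N ∧ N ⊆ O := by
  obtain ⟨b, hbB, hCb, hbO⟩ := cc_basis.exists_subset_of_mem_open hC hO
  exact ⟨b, cc_basis_clopen hbB, hCb, hbO⟩

/-- Openness of the `⊴`-downset of an open set, assuming `Z` is Esakia. -/
lemma cc_dn_open (hE : ∀ V : Set Z, IsClopen V → IsClopen (dnn V)) {𝒱 : Set ↥(CC Z)}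
    (h𝒱 : IsOpen 𝒱) :
    IsOpen {C : ↥(CC Z) | ∃ K ∈ 𝒱, lec (C : Set Z) (K : Set Z)} := by
  classical
  rw [isOpen_iff_forall_mem_open]
  rintro C ⟨K, hK𝒱, hlec⟩
  obtain ⟨b, hbB, hKb, hb𝒱⟩ := cc_basis.exists_subset_of_mem_open hK𝒱 h𝒱
  obtain ⟨f, ⟨hffin, hfsub⟩, rfl⟩ := hbB
  haveI : Nonempty Z := ⟨K.2.1.some⟩
  choose! Vf hVfcl hVform using fun s (hs : s ∈ f) => hfsub hs
  set P : Set (Set ↥(CC Z)) := {s | s ∈ f ∧ s = ccBox (Vf s)} with hP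
  have hPf : P ⊆ f := fun s hs => hs.1
  set V : Set Z := ⋂ s ∈ P, Vf s with hV
  have hVcl : IsClopen V :=
    Set.Finite.isClopen_biInter (hffin.subset hPf) (fun s hs => hVfcl s hs.1)
  set 𝒲 : Set (Set Z) := insert V ((fun s => Vf s ∩ V) '' {s | s ∈ f ∧ s ∉ P}) with h𝒲
  have h𝒲fin : 𝒲.Finite :=
    ((hffin.subset (fun s hs => hs.1)).image _).insert V
  have h𝒲cl : ∀ W ∈ 𝒲, IsClopen W := by
    rintro W (rfl | ⟨s, hs, rfl⟩)
    · exact hVcl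
    · exact (hVfcl s hs.1).inter hVcl
  have hdia : ∀ s, s ∈ f → s ∉ P → s = ccDia (Vf s) :=
    fun s hs hns => (hVform s hs).resolve_left (fun h => hns ⟨hs, h⟩)
  have hKV : (K : Set Z) ⊆ V := by
    intro x hx
    rw [hV, mem_iInter₂]
    intro s hs
    have := Set.mem_sInter.1 hKb s hs.1
    rw [hs.2] at this
    exact this hx
  have hKW : ∀ W ∈ 𝒲, ((K : Set Z) ∩ W).Nonempty := by
    rintro W (rfl | ⟨s, hs, rfl⟩)
    · obtain ⟨k, hk⟩ := K.2.1
      exact ⟨k, hk, hKV hk⟩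
    · have := Set.mem_sInter.1 hKb s hs.1
      rw [hdia s hs.1 hs.2] at this
      obtain ⟨x, hxK, hxVf⟩ := this
      exact ⟨x, hxK, hxVf, hKV hxK⟩
  have hB : ∀ C' : ↥(CC Z), (C' : Set Z) ⊆ V →
      (∀ W ∈ 𝒲, ((C' : Set Z) ∩ W).Nonempty) → C' ∈ Set.sInter f := by
    intro C' hC'V hC'W
    rw [Set.mem_sInter]
    intro s hs
    by_cases hsP : s ∈ P
    · rw [hsP.2]
      intro x hx
      have := hC'V hx
      rw [hV] at this
      exact mem_iInter₂.1 this s hsP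
    · rw [hdia s hs hsP]
      obtain ⟨x, hx1, hx2, _⟩ := hC'W (Vf s ∩ V) (Or.inr ⟨s, ⟨hs, hsP⟩, rfl⟩)
      exact ⟨x, hx1, hx2⟩
  have hwex : ∀ W ∈ 𝒲, ∃ x, x ∈ (K : Set Z) ∧ x ∈ W :=
    fun W hW => (hKW W hW).imp (fun x hx => ⟨hx.1, hx.2⟩)
  choose! w hw1 hw2 using hwex
  have hwnd : ∀ W ∈ 𝒲, w W ∉ dnn ((C : Set Z) ∩ Vᶜ) := by
    rintro W hW ⟨z, ⟨hzC, hzV⟩, hle⟩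
    exact hzV (hKV (hlec.2 (w W) (hw1 W hW) z hzC hle))
  have hGex : ∀ W ∈ 𝒲, ∃ G : Set Z, IsClopen G ∧ (C : Set Z) ∩ Vᶜ ⊆ G ∧ w W ∉ dnn G :=
    fun W hW => exists_clopen_dn (C.2.2.1.inter hVcl.compl.isClosed) (hwnd W hW)
  choose! G hGcl hGsub hGnd using hGex
  set G0 : Set Z := ⋂ W ∈ 𝒲, G W with hG0
  have hG0cl : IsClopen G0 := Set.Finite.isClopen_biInter h𝒲fin (fun W hW => hGcl W hW)
  refine ⟨ccBox (V ∪ G0) ∩ ⋂ W ∈ 𝒲, ccDia (W \ dnn G0), ?_, ?_, ?_, ?_⟩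
  · -- the neighborhood is inside the downset
    rintro C' ⟨hC'box, hC'dia⟩
    have hC'dia' : ∀ W ∈ 𝒲, ((C' : Set Z) ∩ (W \ dnn G0)).Nonempty :=
      fun W hW => mem_iInter₂.1 hC'dia W hW
    have hUex : ∀ W ∈ 𝒲, ∃ x, x ∈ (C' : Set Z) ∧ x ∈ W ∧ x ∉ dnn G0 :=
      fun W hW => (hC'dia' W hW).imp (fun x hx => ⟨hx.1, hx.2.1, hx.2.2⟩)
    choose! u hu1 hu2 hu3 using hUex
    have himgsub : u '' 𝒲 ⊆ (C' : Set Z) := by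
      rintro _ ⟨W, hW, rfl⟩
      exact hu1 W hW
    obtain ⟨m, hm𝒲, hmmin⟩ := exists_min_finite (h𝒲fin.image u)
      ⟨u V, V, Or.inl rfl, rfl⟩ (C'.2.2.2.mono himgsub)
    obtain ⟨W₀, hW₀, hmW₀⟩ := hm𝒲
    have hmC' : m ∈ (C' : Set Z) := himgsub ⟨W₀, hW₀, hmW₀⟩
    have hmnd : m ∉ dnn G0 := hmW₀ ▸ hu3 W₀ hW₀
    have hKsmem : (C' : Set Z) ∩ Ici m ∈ CC Z :=
      ⟨⟨m, hmC', le_rfl⟩, C'.2.2.1.inter (isClosed_Ici_pr m),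
        C'.2.2.2.mono inter_subset_left⟩
    refine ⟨⟨_, hKsmem⟩, hb𝒱 (hB _ ?_ ?_), inter_subset_left,
      fun x hx y hy hxy => ⟨hy, hx.2.trans hxy⟩⟩
    · rintro z ⟨hzC', hmz⟩
      rcases hC'box hzC' with hzV | hzG
      · exact hzV
      · exact absurd ⟨z, hzG, hmz⟩ hmnd
    · intro W hW
      exact ⟨u W, ⟨hu1 W hW, hmmin (u W) ⟨W, hW, rfl⟩⟩, hu2 W hW⟩
  · -- openness
    refine IsOpen.inter (isClopen_ccBox (hVcl.union hG0cl)).isOpen ?_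
    refine (Set.Finite.isClopen_biInter h𝒲fin (fun W hW => ?_)).isOpen
    rw [diff_eq]
    exact isClopen_ccDia ((h𝒲cl W hW).inter (hE G0 hG0cl).compl)
  · -- C is in the box part
    intro z hzC
    by_cases hzV : z ∈ V
    · exact Or.inl hzV
    · exact Or.inr (mem_iInter₂.2 (fun W hW => hGsub W hW ⟨hzC, hzV⟩))
  · -- C is in the dia parts
    refine mem_iInter₂.2 (fun W hW => ?_)
    refine ⟨w W, hlec.1 (hw1 W hW), hw2 W hW, fun hmem => hGnd W hW ?_⟩
    exact dnn_mono (biInter_subset_of_mem hW) hmem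

/-- Closedness of the `⊴`-downset of a closed set. -/
lemma cc_dn_closed {𝒱 : Set ↥(CC Z)} (h𝒱 : IsClosed 𝒱) :
    IsClosed {C : ↥(CC Z) | ∃ K ∈ 𝒱, lec (C : Set Z) (K : Set Z)} := by
  haveI : CompactSpace ↥(CC Z) := ccCompactSpace
  haveI : T2Space ↥(CC Z) := cc_t2
  have hD : IsClosed {p : ↥(CC Z) × ↥(CC Z) | p.2 ∈ 𝒱 ∧ lec (p.1 : Set Z) (p.2 : Set Z)} :=
    (h𝒱.preimage continuous_snd).inter lec_isClosed
  have himg : {C : ↥(CC Z) | ∃ K ∈ 𝒱, lec (C : Set Z) (K : Set Z)} =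
      Prod.fst '' {p : ↥(CC Z) × ↥(CC Z) | p.2 ∈ 𝒱 ∧ lec (p.1 : Set Z) (p.2 : Set Z)} := by
    ext C
    constructor
    · rintro ⟨K, hK, hlec⟩
      exact ⟨(C, K), ⟨hK, hlec⟩, rfl⟩
    · rintro ⟨⟨C', K⟩, ⟨hK, hlec⟩, rfl⟩
      exact ⟨K, hK, hlec⟩
  rw [himg]
  exact (hD.isCompact.image continuous_fst).isClosed

lemma cc_dn_clopen (hE : ∀ V : Set Z, IsClopen V → IsClopen (dnn V)) {𝒱 : Set ↥(CC Z)}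
    (h𝒱 : IsClopen 𝒱) :
    IsClopen {C : ↥(CC Z) | ∃ K ∈ 𝒱, lec (C : Set Z) (K : Set Z)} :=
  ⟨cc_dn_closed h𝒱.isClosed, cc_dn_open hE h𝒱.isOpen⟩

end Downset
section Product

variable {I : Type*} {Y : I → Type*} [∀ i, TopologicalSpace (Y i)] [∀ i, PartialOrder (Y i)]
  [∀ i, CompactSpace (Y i)] [∀ i, PriestleySpace (Y i)]

lemma pi_priestley : PriestleySpace (∀ i, Y i) := by
  constructor
  intro f g h
  rw [Pi.le_def] at h
  push_neg at h
  obtain ⟨i, hi⟩ := h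
  obtain ⟨U, hU, hUup, hfU, hgU⟩ := exists_isClopen_upper_of_not_le hi
  refine ⟨(fun p : ∀ j, Y j => p i) ⁻¹' U, hU.preimage (continuous_apply i), ?_, hfU, hgU⟩
  intro a b hab ha
  exact hUup (hab i) ha

lemma pi_esakia
    (hEsa : ∀ i, ∀ V : Set (Y i), IsClopen V → IsClopen {x : Y i | ∃ y ∈ V, x ≤ y}) :
    ∀ V : Set (∀ i, Y i), IsClopen V → IsClopen (dnn V) := by
  classical
  haveI := pi_priestley (Y := Y)
  intro V hV
  constructor
  · exact isClosed_dnn hV.isClosed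
  · rw [isOpen_iff_forall_mem_open]
    rintro f ⟨g, hgV, hfg⟩
    obtain ⟨s, u, hu, hsub⟩ := isOpen_pi_iff.1 hV.isOpen g hgV
    have hex : ∀ i ∈ s, ∃ B : Set (Y i), IsClopen B ∧ g i ∈ B ∧ B ⊆ u i :=
      fun i hi => exists_clopen_of_mem_open (hu i hi).1 (hu i hi).2
    choose! B hBcl hBg hBu using hex
    refine ⟨⋂ i ∈ s, (fun p : ∀ j, Y j => p i) ⁻¹' (dnn (B i)), ?_, ?_, ?_⟩
    · intro h hh
      rw [mem_iInter₂] at hh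
      have hh' : ∀ i, i ∈ s → ∃ b : Y i, b ∈ B i ∧ h i ≤ b := by
        intro i hi
        obtain ⟨b, hb1, hb2⟩ := hh i hi
        exact ⟨b, hb1, hb2⟩
      set g' : ∀ j, Y j := fun i => if hi : i ∈ s then Classical.choose (hh' i hi) else h i
        with hg'
      have hg'V : g' ∈ V := by
        apply hsub
        intro i hi
        have hi' : i ∈ s := hi
        have hspec := Classical.choose_spec (hh' i hi')
        have : g' i = Classical.choose (hh' i hi') := by
          rw [hg']; exact dif_pos hi'
        rw [this]
        exact hBu i hi' hspec.1
      refine ⟨g', hg'V, fun i => ?_⟩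
      by_cases hi : i ∈ s
      · have hspec := Classical.choose_spec (hh' i hi)
        have : g' i = Classical.choose (hh' i hi) := by rw [hg']; exact dif_pos hi
        rw [this]
        exact hspec.2
      · have : g' i = h i := by rw [hg']; exact dif_neg hi
        rw [this]
    · refine (isClopen_biInter_finset (fun i hi => ?_)).isOpen
      exact (hEsa i (B i) (hBcl i hi)).preimage (continuous_apply i)
    · exact mem_iInter₂.2 (fun i hi => ⟨g i, hBg i hi, hfg i⟩)

lemma tensor_upset' : ∀ C₁ C₂ : ↥(CC (∀ i, Y i)),
    lec (C₁ : Set (∀ i, Y i)) (C₂ : Set (∀ i, Y i)) → C₁ ∈ tensor Y → C₂ ∈ tensor Y := by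
  intro C₁ C₂ hle h1 i
  rintro a b hab ⟨f, hfC₂, rfl⟩
  have hbU : b ∈ (fun f : ∀ j, Y j => f i) '' (C₁ : Set (∀ j, Y j)) :=
    h1 i hab ⟨f, hle.1 hfC₂, rfl⟩
  obtain ⟨g, hgC₁, hgb⟩ := hbU
  rcases eq_or_ne f g with rfl | hne
  · exact ⟨f, hfC₂, hgb⟩
  rcases C₁.2.2.2 (hle.1 hfC₂) hgC₁ hne with h | h
  · exact ⟨g, hle.2 f hfC₂ g hgC₁ h, hgb⟩
  · exact ⟨f, hfC₂, le_antisymm hab (hgb ▸ h i)⟩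

lemma tensor_closed'
    (hEsa : ∀ i, ∀ V : Set (Y i), IsClopen V → IsClopen {x : Y i | ∃ y ∈ V, x ≤ y}) :
    IsClosed (tensor Y) := by
  haveI := pi_priestley (Y := Y)
  rw [← isOpen_compl_iff, isOpen_iff_forall_mem_open]
  intro C hC
  simp only [mem_compl_iff, tensor, mem_setOf_eq] at hC
  push_neg at hC
  obtain ⟨i, hi⟩ := hC
  rw [IsUpperSet] at hi
  push_neg at hi
  obtain ⟨a, b, hab, ha, hb⟩ := hi
  obtain ⟨fg, hfgC, hfga⟩ := ha
  have himg : IsClosed ((fun f : ∀ j, Y j => f i) '' (C : Set (∀ j, Y j))) :=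
    (C.2.2.1.isCompact.image (continuous_apply i)).isClosed
  obtain ⟨W, hWcl, hbW, hWim⟩ := exists_clopen_sep himg hb
  have hDcl : IsClopen {x : Y i | ∃ y ∈ W, x ≤ y} := hEsa i W hWcl
  refine ⟨ccDia ((fun f : ∀ j, Y j => f i) ⁻¹' ({x : Y i | ∃ y ∈ W, x ≤ y} ∩ Wᶜ)) ∩
      ccBox ((fun f : ∀ j, Y j => f i) ⁻¹' Wᶜ), ?_, ?_, ?_⟩
  · rintro C' ⟨⟨f', hf'C, hf'D, hf'W⟩, hbox⟩ hC'T
    obtain ⟨y, hyW, hle⟩ := hf'D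
    have : y ∈ (fun f : ∀ j, Y j => f i) '' (C' : Set (∀ j, Y j)) :=
      hC'T i hle ⟨f', hf'C, rfl⟩
    obtain ⟨f'', hf''C, hf''⟩ := this
    exact (hbox hf''C) (hf'' ▸ hyW)
  · exact ((isClopen_ccDia ((hDcl.inter hWcl.compl).preimage (continuous_apply i))).inter
      (isClopen_ccBox (hWcl.compl.preimage (continuous_apply i)))).isOpen
  · constructor
    · refine ⟨fg, hfgC, ⟨b, hbW, ?_⟩, ?_⟩
      · exact le_of_eq_of_le hfga hab
      · exact fun h => hWim (fg i) ⟨fg, hfgC, rfl⟩ h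
    · exact fun f' hf' => hWim (f' i) ⟨f', hf', rfl⟩

end Product
section Extend

variable {Z : Type*} [TopologicalSpace Z] [PartialOrder Z] [CompactSpace Z] [PriestleySpace Z]

lemma clopen_extend {T : Set ↥(CC Z)} (hTc : IsClosed T) {𝒱 : Set ↥T} (h𝒱 : IsClopen 𝒱) :
    ∃ 𝒱' : Set ↥(CC Z), IsClopen 𝒱' ∧ Subtype.val ⁻¹' 𝒱' = 𝒱 := by
  haveI : CompactSpace ↥(CC Z) := ccCompactSpace
  obtain ⟨O, hO, hOeq⟩ := isOpen_induced_iff.1 h𝒱.isOpen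
  haveI : CompactSpace ↥T := isCompact_iff_compactSpace.1 hTc.isCompact
  have hVcpt : IsCompact (Subtype.val '' 𝒱) :=
    (h𝒱.isClosed.isCompact).image continuous_subtype_val
  have hcov : ∀ p : {p : ↥(CC Z) // p ∈ Subtype.val '' 𝒱},
      ∃ N : Set ↥(CC Z), IsClopen N ∧ p.1 ∈ N ∧ N ⊆ O := by
    rintro ⟨p, C, hC𝒱, rfl⟩
    have hmem : (C : ↥(CC Z)) ∈ O := by
      have : C ∈ Subtype.val ⁻¹' O := by rw [hOeq]; exact hC𝒱
      exact this
    exact cc_clopen_nbhd hO hmem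
  choose N hNcl hNmem hNO using hcov
  obtain ⟨t, ht⟩ := hVcpt.elim_finite_subcover (fun p => N p) (fun p => (hNcl p).isOpen)
    (fun x hx => mem_iUnion.2 ⟨⟨x, hx⟩, hNmem _⟩)
  refine ⟨⋃ p ∈ t, N p, isClopen_biUnion_finset (fun p _ => hNcl p), ?_⟩
  ext x
  constructor
  · intro hx
    obtain ⟨p, _, hxN⟩ := mem_iUnion₂.1 hx
    have : x ∈ Subtype.val ⁻¹' O := hNO p hxN
    rw [hOeq] at this
    exact this
  · intro hx
    have : (x : ↥(CC Z)) ∈ Subtype.val '' 𝒱 := ⟨x, hx, rfl⟩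
    exact ht this

end Extend
/-- `⊗Yᵢ` is a closed subset and a `⊴`-upset of `CC(∏Yᵢ)`; consequently, with the
induced topology and order it is an Esakia root system (compact, Priestley-separated by
clopen `⊴`-upsets, the `⊴`-downset of every clopen is clopen, root system). -/
theorem stmt10 (I : Type*) (Y : I → Type*) [∀ i, TopologicalSpace (Y i)]
    [∀ i, PartialOrder (Y i)] [∀ i, CompactSpace (Y i)] [∀ i, PriestleySpace (Y i)]
    (hEsa : ∀ i, ∀ V : Set (Y i), IsClopen V → IsClopen {x : Y i | ∃ y ∈ V, x ≤ y})
    (hRoot : ∀ i, ∀ y : Y i, IsChain (· ≤ ·) (Ici y)) :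
    IsClosed (tensor Y) ∧
    (∀ C₁ C₂ : ↥(CC (∀ i, Y i)), lec (C₁ : Set (∀ i, Y i)) (C₂ : Set (∀ i, Y i)) →
      C₁ ∈ tensor Y → C₂ ∈ tensor Y) ∧
    CompactSpace ↥(tensor Y) ∧
    (∀ A B : ↥(tensor Y), ¬ lec (A.1 : Set (∀ i, Y i)) (B.1 : Set (∀ i, Y i)) →
      ∃ 𝒰 : Set ↥(tensor Y), IsClopen 𝒰 ∧
        (∀ D ∈ 𝒰, ∀ E : ↥(tensor Y),
          lec (D.1 : Set (∀ i, Y i)) (E.1 : Set (∀ i, Y i)) → E ∈ 𝒰) ∧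
        A ∈ 𝒰 ∧ B ∉ 𝒰) ∧
    (∀ 𝒱 : Set ↥(tensor Y), IsClopen 𝒱 →
      IsClopen {C : ↥(tensor Y) |
        ∃ K ∈ 𝒱, lec (C.1 : Set (∀ i, Y i)) (K.1 : Set (∀ i, Y i))}) ∧
    (∀ C : ↥(tensor Y),
      IsChain (fun K₁ K₂ : ↥(tensor Y) =>
          lec (K₁.1 : Set (∀ i, Y i)) (K₂.1 : Set (∀ i, Y i)))
        {K : ↥(tensor Y) | lec (C.1 : Set (∀ i, Y i)) (K.1 : Set (∀ i, Y i))}) := by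
  haveI hpr : PriestleySpace (∀ i, Y i) := pi_priestley
  have hE : ∀ V : Set (∀ i, Y i), IsClopen V → IsClopen (dnn V) := pi_esakia hEsa
  have h1 : IsClosed (tensor Y) := tensor_closed' hEsa
  have h2 := tensor_upset' (Y := Y)
  refine ⟨h1, h2, ?_, ?_, ?_, ?_⟩
  · haveI : CompactSpace ↥(CC (∀ i, Y i)) := ccCompactSpace
    exact isCompact_iff_compactSpace.1 h1.isCompact
  · intro A B hne
    obtain ⟨𝒰₀, h𝒰₀cl, h𝒰₀up, hA, hB⟩ := cc_sep A.1 B.1 hne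
    refine ⟨Subtype.val ⁻¹' 𝒰₀, h𝒰₀cl.preimage continuous_subtype_val, ?_, hA, hB⟩
    intro D hD E hle
    exact h𝒰₀up D.1 hD E.1 hle
  · intro 𝒱 h𝒱
    obtain ⟨𝒱', h𝒱'cl, h𝒱'eq⟩ := clopen_extend h1 h𝒱
    have key : {C : ↥(tensor Y) |
          ∃ K ∈ 𝒱, lec (C.1 : Set (∀ i, Y i)) (K.1 : Set (∀ i, Y i))}
        = Subtype.val ⁻¹' {C : ↥(CC (∀ i, Y i)) | ∃ K ∈ 𝒱',
            lec (C : Set (∀ i, Y i)) (K : Set (∀ i, Y i))} := by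
      ext C
      constructor
      · rintro ⟨K, hK𝒱, hlec⟩
        refine ⟨K.1, ?_, hlec⟩
        rw [← h𝒱'eq] at hK𝒱
        exact hK𝒱
      · rintro ⟨K', hK', hlec⟩
        have hKT : K' ∈ tensor Y := h2 C.1 K' hlec C.2
        refine ⟨⟨K', hKT⟩, ?_, hlec⟩
        have hmem : (⟨K', hKT⟩ : ↥(tensor Y)) ∈ Subtype.val ⁻¹' 𝒱' := hK'
        rw [h𝒱'eq] at hmem
        exact hmem
    rw [key]
    exact (cc_dn_clopen hE h𝒱'cl).preimage continuous_subtype_val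
  · intro C K₁ hK₁ K₂ hK₂ hne
    simp only [mem_setOf_eq] at hK₁ hK₂
    have hsub : (K₂.1 : Set (∀ i, Y i)) ⊆ (K₁.1 : Set (∀ i, Y i)) ∨
        (K₁.1 : Set (∀ i, Y i)) ⊆ (K₂.1 : Set (∀ i, Y i)) := by
      by_contra hcon
      push_neg at hcon
      obtain ⟨h1', h2'⟩ := hcon
      obtain ⟨a, haK₂, haK₁⟩ := not_subset.1 h1'
      obtain ⟨b, hbK₁, hbK₂⟩ := not_subset.1 h2'
      have haC : a ∈ (C.1 : Set (∀ i, Y i)) := hK₂.1 haK₂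
      have hbC : b ∈ (C.1 : Set (∀ i, Y i)) := hK₁.1 hbK₁
      rcases eq_or_ne a b with rfl | hab
      · exact haK₁ hbK₁
      rcases C.1.2.2.2 haC hbC hab with h | h
      · exact hbK₂ (hK₂.2 a haK₂ b hbC h)
      · exact haK₁ (hK₁.2 b hbK₁ a haC h)
    rcases hsub with h | h
    · exact Or.inl ⟨h, fun x hx y hy hxy => hK₂.2 x hx y (hK₁.1 hy) hxy⟩
    · exact Or.inr ⟨h, fun x hx y hy hxy => hK₁.2 x hx y (hK₂.1 hy) hxy⟩
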